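/- arXiv:0709.3346 — 3 statements merged into one kernel-verified Lean document; each statement's English description precedes it below -/
import Mathlib

section
/- For any complex numbers a and b and any real p ≥ 0, ∫₀^{2π} |a + b·e^{iβ}|^p dβ ≥ 2π · max(|a|^p, |b|^p). -/
open Complex Real intervalIntegral Set Metric

lemma log_circle_avg (w : ℂ) (hw : ‖w‖ < 1) :
    ∫ β in (0:ℝ)..(2*π), Real.log (‖1 + w * Complex.exp (I * β)‖) = 0 := by
  set g : ℂ → ℂ := fun z => Complex.log (1 + w * z) with hg
  have hre : ∀ z : ℂ, ‖z‖ ≤ 1 → 0 < (1 + w * z).re := by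
    intro z hz
    have h1 : ‖w * z‖ < 1 := by
      rw [norm_mul]
      calc ‖w‖ * ‖z‖ ≤ ‖w‖ * 1 :=
            mul_le_mul_of_nonneg_left hz (norm_nonneg w)
        _ < 1 := by simpa using hw
    have h2 : |(w * z).re| ≤ ‖w * z‖ := Complex.abs_re_le_norm _
    simp only [Complex.add_re, Complex.one_re]
    nlinarith [abs_lt.mp (h2.trans_lt h1) |>.1]
  have hd : ∀ z : ℂ, ‖z‖ ≤ 1 → DifferentiableAt ℂ g z := by
    intro z hz
    apply DifferentiableAt.clog
    · fun_prop
    · exact Or.inl (hre z hz)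
  have key := circleIntegral_sub_inv_smul_of_differentiable_on_off_countable
    (f := g) (c := 0) (R := 1) (w := 0) (s := ∅) Set.countable_empty
    (mem_ball_self one_pos)
    (fun z hz => (hd z (by simpa using mem_closedBall_zero_iff.mp hz)).continuousAt.continuousWithinAt)
    (fun z hz => hd z (by simpa using (mem_ball_zero_iff.mp hz.1).le))
  have hg0 : g 0 = 0 := by simp [hg]
  rw [hg0, smul_zero] at key
  -- unfold circle integral
  have hcm : ∀ θ : ℝ, circleMap 0 1 θ = Complex.exp (I * θ) := by
    intro θ; simp [circleMap, mul_comm]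
  have key2 : (∫ θ in (0:ℝ)..2*π, I * g (Complex.exp (I * θ))) = 0 := by
    rw [← key, circleIntegral]
    apply intervalIntegral.integral_congr
    intro θ _
    have hexp : Complex.exp (I * θ) ≠ 0 := Complex.exp_ne_zero _
    simp only [deriv_circleMap, hcm, smul_eq_mul, sub_zero]
    field_simp
  rw [intervalIntegral.integral_const_mul] at key2
  have key3 : (∫ θ in (0:ℝ)..2*π, g (Complex.exp (I * θ))) = 0 := by
    rcases mul_eq_zero.mp key2 with h | h
    · exact absurd h I_ne_zero
    · exact h
  have hcont : Continuous fun θ : ℝ => g (Complex.exp (I * θ)) := by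
    apply continuous_iff_continuousAt.mpr
    intro θ
    exact (hd _ (by simp [Complex.norm_exp])).continuousAt.comp (by fun_prop)
  have := Complex.reCLM.intervalIntegral_comp_comm
    (μ := MeasureTheory.volume) (f := fun θ : ℝ => g (Complex.exp (I * θ))) (a := 0) (b := 2*π)
    (hcont.intervalIntegrable _ _)
  rw [key3] at this
  simpa [hg, Complex.log_re, Complex.reCLM_apply] using this


lemma main_lt (a b : ℂ) (p : ℝ) (hp : 0 < p) (hab : ‖b‖ < ‖a‖) :
    2 * π * (‖a‖)^p
      ≤ ∫ β in (0:ℝ)..(2*π), (‖a + b * Complex.exp (I * β)‖)^p := by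
  set A := ‖a‖ with hA
  have hA0 : 0 < A := lt_of_le_of_lt (norm_nonneg b) hab
  have ha0 : a ≠ 0 := by simpa [hA] using hA0.ne'
  set f : ℝ → ℝ := fun β => ‖a + b * Complex.exp (I * β)‖ with hf
  have hfpos : ∀ β, 0 < f β := by
    intro β
    have h1 : ‖b * Complex.exp (I * β)‖ = ‖b‖ := by
      simp [Complex.norm_exp]
    have h2 : A ≤ f β + ‖b‖ := by
      have h3 := norm_sub_le (a + b * Complex.exp (I * β)) (b * Complex.exp (I * β))
      simpa [hf, hA, norm_mul, Complex.norm_exp] using h3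
    simp only [hf]
    have : 0 < A - ‖b‖ := sub_pos.mpr hab
    simp only [hf] at h2
    linarith
  have hfc : Continuous f := continuous_norm.comp (by fun_prop)
  have hlogc : Continuous fun β => Real.log (f β) :=
    hfc.log (fun β => (hfpos β).ne')
  have hfpc : Continuous fun β => (f β) ^ p :=
    hfc.rpow_const (fun β => Or.inr hp.le)
  -- integral of log f
  have hlog : (∫ β in (0:ℝ)..(2*π), Real.log (f β)) = 2 * π * Real.log A := by
    have hw : ‖b / a‖ < 1 := by
      rw [norm_div, div_lt_one hA0]; exact hab
    have key := log_circle_avg (b / a) hw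
    have heq : ∀ β : ℝ, Real.log (f β)
        = Real.log A + Real.log (‖1 + (b / a) * Complex.exp (I * β)‖) := by
      intro β
      have hfactor : a + b * Complex.exp (I * β) = a * (1 + (b / a) * Complex.exp (I * β)) := by
        field_simp
      have hne : ‖1 + (b / a) * Complex.exp (I * β)‖ ≠ 0 := by
        intro h0
        have := hfpos β
        rw [hf] at this
        simp only at this
        rw [hfactor, norm_mul, h0, mul_zero] at this
        exact lt_irrefl 0 this
      rw [hf]
      simp only
      rw [hfactor, norm_mul, Real.log_mul hA0.ne' hne]
    rw [intervalIntegral.integral_congr (fun β _ => heq β),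
      intervalIntegral.integral_add intervalIntegrable_const ?_]
    · rw [key, intervalIntegral.integral_const]
      simp [mul_comm]
    · apply Continuous.intervalIntegrable
      have : Continuous fun β : ℝ => ‖1 + (b / a) * Complex.exp (I * β)‖ :=
        continuous_norm.comp (by fun_prop)
      apply this.log
      intro β
      have h1 : ‖(b/a) * Complex.exp (I * β)‖ < 1 := by
        rw [norm_mul]; simpa [Complex.norm_exp] using hw
      intro h0
      have h3 := norm_sub_le (1 + (b/a) * Complex.exp (I * β)) ((b/a) * Complex.exp (I * β))
      rw [add_sub_cancel_right] at h3
      simp only [h0, zero_add, norm_one] at h3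
      linarith
  -- pointwise bound
  have hpt : ∀ β ∈ Set.Icc (0:ℝ) (2*π),
      A^p * (1 - p * Real.log A) + (A^p * p) * Real.log (f β) ≤ (f β)^p := by
    intro β _
    have h1 : (f β)^p = Real.exp (Real.log (f β) * p) := Real.rpow_def_of_pos (hfpos β) p
    have h2 : A^p = Real.exp (Real.log A * p) := Real.rpow_def_of_pos hA0 p
    have h3 := Real.add_one_le_exp (p * (Real.log (f β) - Real.log A))
    calc A^p * (1 - p * Real.log A) + (A^p * p) * Real.log (f β)
        = A^p * (p * (Real.log (f β) - Real.log A) + 1) := by ring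
      _ ≤ A^p * Real.exp (p * (Real.log (f β) - Real.log A)) := by
          apply mul_le_mul_of_nonneg_left h3 (Real.rpow_nonneg hA0.le p)
      _ = (f β)^p := by
          rw [h1, h2, ← Real.exp_add]
          ring_nf
  have hglc : Continuous fun β => A^p * (1 - p * Real.log A) + (A^p * p) * Real.log (f β) := by
    continuity
  have hmono := intervalIntegral.integral_mono_on (μ := MeasureTheory.volume) (by positivity : (0:ℝ) ≤ 2*π)
    (hglc.intervalIntegrable _ _)
    (hfpc.intervalIntegrable _ _) hpt
  rw [intervalIntegral.integral_add (intervalIntegrable_const) ((hlogc.intervalIntegrable _ _).const_mul _),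
    intervalIntegral.integral_const, intervalIntegral.integral_const_mul, hlog, smul_eq_mul] at hmono
  calc 2 * π * A^p = (2*π - 0) * (A^p * (1 - p * Real.log A)) + A^p * p * (2 * π * Real.log A) := by ring
    _ ≤ ∫ β in (0:ℝ)..(2*π), (f β)^p := hmono
    _ = ∫ β in (0:ℝ)..(2*π), (‖a + b * Complex.exp (I * β)‖)^p := rfl


lemma swap_eq (a b : ℂ) (p : ℝ) :
    (∫ β in (0:ℝ)..(2*π), (‖a + b * Complex.exp (I * β)‖)^p)
      = ∫ β in (0:ℝ)..(2*π), (‖b + a * Complex.exp (I * β)‖)^p := by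
  set F : ℝ → ℝ := fun β => (‖a + b * Complex.exp (I * β)‖)^p with hF
  have hper : Function.Periodic F (2*π) := by
    intro β
    simp only [hF]
    have h2 : (I * ((β:ℝ) + 2*π : ℝ)) = I * β + 2*π*I := by push_cast; ring
    rw [h2, Complex.exp_add, Complex.exp_two_pi_mul_I, mul_one]
  have hpt : ∀ β : ℝ, (‖b + a * Complex.exp (I * β)‖)^p = F (-β) := by
    intro β
    have hee : Complex.exp (I * β) * Complex.exp (-(I * β)) = 1 := by
      rw [← Complex.exp_add]; simp
    have h1 : b + a * Complex.exp (I * β)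
        = Complex.exp (I * β) * (a + b * Complex.exp (-(I * β))) := by
      linear_combination (-b) * hee
    simp only [hF]
    congr 1
    push_cast
    rw [mul_neg, h1, norm_mul, Complex.norm_exp]
    simp
  rw [intervalIntegral.integral_congr (fun β _ => hpt β),
    intervalIntegral.integral_comp_neg (f := F)]
  have := hper.intervalIntegral_add_eq (-(2*π)) 0
  simp only [neg_add_cancel, zero_add] at this
  rw [neg_zero, this]

theorem integral_abs_add_rpow_ge (a b : ℂ) (p : ℝ) (hp : 0 ≤ p) :
    (∫ β in (0:ℝ)..(2 * π), ‖a + b * Complex.exp (I * β)‖ ^ p)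
      ≥ 2 * π * max (‖a‖ ^ p) (‖b‖ ^ p) := by
  rcases hp.eq_or_lt with rfl | hp
  · simp [Real.rpow_zero, Real.pi_pos.le]
  rw [ge_iff_le]
  -- key: suffices for |b| ≤ |a|
  have key : ∀ a b : ℂ, ‖b‖ ≤ ‖a‖ →
      2 * π * (‖a‖)^p
        ≤ ∫ β in (0:ℝ)..(2*π), (‖a + b * Complex.exp (I * β)‖)^p := by
    intro a b hba
    rcases hba.lt_or_eq with h | h
    · exact main_lt a b p hp h
    · -- |b| = |a|
      rcases eq_or_ne a 0 with rfl | ha0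
      · have hb0 : b = 0 := by
          have : ‖b‖ = 0 := le_antisymm (by simpa using hba) (norm_nonneg b)
          exact norm_eq_zero.mp this
        subst hb0
        simp [Real.zero_rpow hp.ne']
      · set F : ℝ → ℝ := fun r =>
          ∫ β in (0:ℝ)..(2*π), (‖a + ((r:ℂ) * b) * Complex.exp (I * β)‖)^p with hFdef
        have hFcont : Continuous F := by
          apply intervalIntegral.continuous_parametric_intervalIntegral_of_continuous'
          apply Continuous.rpow_const
          · exact continuous_norm.comp (by fun_prop)
          · exact fun _ => Or.inr hp.le
        have hFlb : ∀ r ∈ Set.Ioo (0:ℝ) 1, 2 * π * (‖a‖)^p ≤ F r := by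
          intro r hr
          apply main_lt
          · exact hp
          rw [norm_mul]
          have hA0 : 0 < ‖a‖ := by
            simpa [norm_pos_iff] using ha0
          calc ‖(r:ℂ)‖ * ‖b‖ = r * ‖a‖ := by
                rw [← h, Complex.norm_real, Real.norm_eq_abs, abs_of_pos hr.1]
            _ < 1 * ‖a‖ := by
                exact mul_lt_mul_of_pos_right hr.2 hA0
            _ = ‖a‖ := one_mul _
        have hF1 : F 1 = ∫ β in (0:ℝ)..(2*π), (‖a + b * Complex.exp (I * β)‖)^p := by
          simp [hFdef]
        have hmem : Set.Ioo (0:ℝ) 1 ∈ nhdsWithin (1:ℝ) (Set.Iio 1) :=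
          Ioo_mem_nhdsLT_of_mem (by constructor <;> norm_num)
        have htend : Filter.Tendsto F (nhdsWithin (1:ℝ) (Set.Iio 1)) (nhds (F 1)) :=
          hFcont.continuousAt.tendsto.mono_left nhdsWithin_le_nhds
        rw [← hF1]
        exact ge_of_tendsto htend (Filter.eventually_iff_exists_mem.mpr
          ⟨Set.Ioo 0 1, hmem, fun r hr => hFlb r hr⟩)
  rcases le_total (‖b‖) (‖a‖) with h | h
  · have hmax : max ((‖a‖)^p) ((‖b‖)^p) = (‖a‖)^p :=
      max_eq_left (Real.rpow_le_rpow (norm_nonneg b) h hp.le)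
    rw [hmax]
    exact key a b h
  · have hmax : max ((‖a‖)^p) ((‖b‖)^p) = (‖b‖)^p :=
      max_eq_right (Real.rpow_le_rpow (norm_nonneg a) h hp.le)
    rw [hmax, swap_eq]
    exact key b a h
end

section
/- If P is a polynomial of degree n, then for every complex number α and every p ≥ 1, (∫₀^{2π} |D_α P(e^{iθ})|^p dθ)^{1/p} ≤ n(|α| + 1)(∫₀^{2π} |P(e^{iθ})|^p dθ)^{1/p}. -/
open Polynomial Complex Real MeasureTheory Finset intervalIntegral

set_option maxHeartbeats 1000000

noncomputable def Np (p : ℝ) (F : ℝ → ℂ) : ℝ :=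
  (∫ θ in (0:ℝ)..(2 * π), (‖F θ‖) ^ p) ^ (1 / p)

theorem Np_nonneg {p : ℝ} (F : ℝ → ℂ) : 0 ≤ Np p F := by
  apply Real.rpow_nonneg
  apply intervalIntegral.integral_nonneg (by positivity)
  intro θ _; positivity

theorem Np_congr_abs {p : ℝ} {F G : ℝ → ℂ}
    (h : ∀ θ, ‖F θ‖ = ‖G θ‖) : Np p F = Np p G := by
  unfold Np
  congr 1
  apply intervalIntegral.integral_congr
  intro θ _; simp only [h]

theorem Np_smul {p : ℝ} (hp : 1 ≤ p) (c : ℂ) (F : ℝ → ℂ) :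
    Np p (fun θ => c * F θ) = ‖c‖ * Np p F := by
  have hp0 : p ≠ 0 := by linarith
  unfold Np
  have h : ∀ θ, (‖c * F θ‖) ^ p = (‖c‖) ^ p * (‖F θ‖) ^ p := by
    intro θ; rw [norm_mul, Real.mul_rpow (by positivity) (by positivity)]
  simp only [h]
  rw [intervalIntegral.integral_const_mul, Real.mul_rpow (by positivity)
    (intervalIntegral.integral_nonneg (by positivity) (fun θ _ => by positivity)),
    ← Real.rpow_mul (by positivity), mul_one_div, div_self hp0, Real.rpow_one]

theorem Np_translate_core {F : ℝ → ℂ} {p : ℝ} (hper : Function.Periodic F (2 * π)) (c : ℝ) :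
    (∫ θ in (0:ℝ)..(2 * π), (‖F (θ + c)‖) ^ p)
      = ∫ θ in (0:ℝ)..(2 * π), (‖F θ‖) ^ p := by
  have h1 : (∫ θ in (0:ℝ)..(2 * π), (‖F (θ + c)‖) ^ p)
      = ∫ θ in (0+c:ℝ)..(2 * π + c), (‖F θ‖) ^ p :=
    intervalIntegral.integral_comp_add_right (fun θ => (‖F θ‖) ^ p) c
  rw [h1]
  have hper' : Function.Periodic (fun θ => (‖F θ‖) ^ p) (2 * π) := by
    intro θ; simp [hper θ]
  have h2 := hper'.intervalIntegral_add_eq c 0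
  simpa [add_comm] using h2

theorem Np_translate {F : ℝ → ℂ} {p : ℝ} (hper : Function.Periodic F (2 * π)) (c : ℝ) :
    Np p (fun θ => F (θ + c)) = Np p F := by
  unfold Np
  rw [Np_translate_core hper c]

theorem memLp_aux {F : ℝ → ℂ} (hF : Continuous F) {p : ℝ} :
    MemLp F (ENNReal.ofReal p) (volume.restrict (Set.Ioc 0 (2 * π))) := by
  obtain ⟨C, hC⟩ := (isCompact_Icc (a := (0:ℝ)) (b := 2 * π)).exists_bound_of_continuousOn
    hF.continuousOn
  apply MemLp.of_bound hF.aestronglyMeasurable C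
  filter_upwards [ae_restrict_mem measurableSet_Ioc] with x hx
  exact hC x (Set.Ioc_subset_Icc_self hx)

theorem Np_eq_eLpNorm {F : ℝ → ℂ} (hF : Continuous F) {p : ℝ} (hp : 1 ≤ p) :
    ENNReal.ofReal (Np p F)
      = eLpNorm F (ENNReal.ofReal p) (volume.restrict (Set.Ioc 0 (2 * π))) := by
  have hp0 : (0:ℝ) < p := by linarith
  rw [MemLp.eLpNorm_eq_integral_rpow_norm (by simpa using hp0) ENNReal.ofReal_ne_top
    (memLp_aux hF)]
  congr 1
  rw [ENNReal.toReal_ofReal hp0.le]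
  unfold Np
  rw [intervalIntegral.integral_of_le (by positivity)]
  simp only [one_div]

theorem Np_add_le {F G : ℝ → ℂ} (hF : Continuous F) (hG : Continuous G) {p : ℝ} (hp : 1 ≤ p) :
    Np p (fun θ => F θ + G θ) ≤ Np p F + Np p G := by
  have key : ENNReal.ofReal (Np p (fun θ => F θ + G θ))
      ≤ ENNReal.ofReal (Np p F) + ENNReal.ofReal (Np p G) := by
    rw [Np_eq_eLpNorm (F := fun θ => F θ + G θ) (hF.add hG) hp, Np_eq_eLpNorm hF hp, Np_eq_eLpNorm hG hp]
    exact eLpNorm_add_le hF.aestronglyMeasurable hG.aestronglyMeasurable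
      (by simpa using ENNReal.ofReal_le_ofReal hp)
  rw [← ENNReal.ofReal_add (Np_nonneg F) (Np_nonneg G)] at key
  exact (ENNReal.ofReal_le_ofReal_iff (add_nonneg (Np_nonneg F) (Np_nonneg G))).mp key

theorem Np_zero {p : ℝ} (hp : 1 ≤ p) : Np p (fun _ => (0:ℂ)) = 0 := by
  have hp0 : p ≠ 0 := by linarith
  unfold Np
  simp [Real.zero_rpow hp0, Real.zero_rpow (inv_ne_zero hp0)]

theorem Np_sum_le {ι : Type*} (t : Finset ι) (H : ι → ℝ → ℂ)
    (hH : ∀ i, Continuous (H i)) {p : ℝ} (hp : 1 ≤ p) :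
    Np p (fun θ => ∑ i ∈ t, H i θ) ≤ ∑ i ∈ t, Np p (H i) := by
  classical
  induction t using Finset.induction_on with
  | empty => simp only [Finset.sum_empty]; exact le_of_eq (Np_zero hp)
  | @insert a s ha ih =>
      simp only [Finset.sum_insert ha]
      refine le_trans (Np_add_le (F := H a) (G := fun θ => ∑ i ∈ s, H i θ)
        (hH a) (continuous_finset_sum _ fun i _ => hH i) hp) ?_
      exact add_le_add (le_refl _) ih

noncomputable section
namespace PolarAux
variable (n : ℕ)
def xx (k : ℕ) : ℝ := (2 * k + 1) * π / (2 * n)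
def ww (k : ℕ) : ℂ := Complex.exp (I * (xx n k))
def eps : ℂ := Complex.exp (I * ((π : ℝ) / (2 * n)))
def Sw (k : ℕ) : ℂ := ∑ j ∈ Finset.range (2 * n), ww n k ^ j
def PS (t : ℕ) : ℂ := ∑ k ∈ Finset.range (2 * n), ww n k ^ t

lemma eps_pow (m : ℕ) : eps n ^ m = Complex.exp (I * ((m * π) / (2 * n))) := by
  rw [eps, ← Complex.exp_nat_mul]; congr 1; ring

lemma ww_eq (k : ℕ) : ww n k = eps n ^ (2 * k + 1) := by
  rw [eps_pow, ww, xx]; congr 1; push_cast; ring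

lemma eps_pow_2n (hn : 1 ≤ n) : eps n ^ (2 * n) = -1 := by
  rw [eps_pow]
  have hn' : (n : ℂ) ≠ 0 := Nat.cast_ne_zero.mpr (by omega)
  have : (I : ℂ) * ((2 * n : ℕ) * (π:ℝ) / (2 * n)) = π * I := by
    push_cast; field_simp
  rw [this, Complex.exp_pi_mul_I]

lemma ww_pow_2n (hn : 1 ≤ n) (k : ℕ) : ww n k ^ (2 * n) = -1 := by
  rw [ww_eq, ← pow_mul, mul_comm (2*k+1) (2*n), pow_mul, eps_pow_2n n hn]
  rw [pow_succ, pow_mul]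
  simp

lemma eps_pow_n (hn : 1 ≤ n) : eps n ^ n = I := by
  rw [eps_pow]
  have hn' : (n : ℂ) ≠ 0 := Nat.cast_ne_zero.mpr (by omega)
  have : (I : ℂ) * ((n : ℕ) * (π:ℝ) / (2 * n)) = (π/2 : ℝ) * I := by
    push_cast; field_simp
  rw [this, Complex.exp_mul_I]
  simp

lemma ww_pow_n (hn : 1 ≤ n) (k : ℕ) : ww n k ^ n = I * (-1:ℂ)^k := by
  rw [ww_eq, ← pow_mul, mul_comm (2*k+1) n, pow_mul, eps_pow_n n hn]
  rw [pow_succ, pow_mul]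
  simp [mul_comm]

-- new material
lemma eps_sq_pow_ne_one (hn : 1 ≤ n) {t : ℕ} (h : ¬ (2 * n ∣ t)) :
    (eps n ^ 2) ^ t ≠ 1 := by
  rw [← pow_mul, mul_comm 2 t, eps_pow]
  intro hone
  rw [Complex.exp_eq_one_iff] at hone
  obtain ⟨m, hm⟩ := hone
  have hπ : (π : ℝ) ≠ 0 := Real.pi_ne_zero
  have hn' : (n : ℝ) ≠ 0 := Nat.cast_ne_zero.mpr (by omega)
  -- hm : I * ((t * 2 : ℕ) * π / (2 * n)) = m * (2 * π * I)
  have hre : ((t * 2 : ℕ) * (π:ℝ) / (2 * n) : ℝ) = (m : ℝ) * (2 * π) := by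
    have := hm
    rw [show ((m:ℂ)) * (2 * (π:ℂ) * I) = (((m : ℝ) * (2 * π) : ℝ) : ℂ) * I by push_cast; ring,
      mul_comm (I:ℂ)] at this
    have h2 := mul_right_cancel₀ Complex.I_ne_zero this
    exact_mod_cast h2
  apply h
  have ht : (t : ℝ) = 2 * n * m := by
    have h0 : ((t:ℝ) - 2 * n * m) * (2 * π) = 0 := by
      field_simp at hre
      push_cast at hre
      have : (t:ℝ) = 2*n*m := by linarith
      rw [this]; ring
    rcases mul_eq_zero.mp h0 with h1 | h1
    · linarith
    · exact absurd h1 (by positivity)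
  have ht' : (t : ℤ) = 2 * n * m := by exact_mod_cast ht
  have hm0 : 0 ≤ m := by
    by_contra hm
    push_neg at hm
    have h2 : 2 * (n:ℤ) * m < 0 :=
      mul_neg_of_pos_of_neg (by positivity) hm
    omega
  refine ⟨m.toNat, ?_⟩
  have hmn : ((m.toNat : ℤ)) = m := Int.toNat_of_nonneg hm0
  have : (t : ℤ) = ((2 * n * m.toNat : ℕ) : ℤ) := by push_cast [hmn]; exact ht'
  exact_mod_cast this

lemma PS_not_dvd (hn : 1 ≤ n) {t : ℕ} (h : ¬ (2 * n ∣ t)) : PS n t = 0 := by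
  have hne := eps_sq_pow_ne_one n hn h
  have : ∀ k, ww n k ^ t = eps n ^ t * ((eps n ^ 2) ^ t) ^ k := by
    intro k
    rw [ww_eq, ← pow_mul, ← pow_mul, ← pow_mul]
    ring_nf
  rw [PS]
  simp only [this]
  rw [← Finset.mul_sum, geom_sum_eq hne]
  have : ((eps n ^ 2) ^ t) ^ (2 * n) = 1 := by
    have h1 : ((eps n ^ 2) ^ t) ^ (2 * n) = ((eps n ^ (2*n)) ^ 2) ^ t := by
      rw [← pow_mul, ← pow_mul, ← pow_mul, ← pow_mul]
      ring_nf
    rw [h1, eps_pow_2n n hn]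
    simp
  rw [this]
  simp

lemma PS_dvd (hn : 1 ≤ n) (s : ℕ) : PS n (2 * n * s) = (2 * n : ℂ) * (-1:ℂ)^s := by
  rw [PS]
  have : ∀ k, ww n k ^ (2 * n * s) = (-1:ℂ)^s := by
    intro k
    rw [pow_mul, ww_pow_2n n hn k]
  simp only [this]
  rw [Finset.sum_const, Finset.card_range]
  push_cast; ring


lemma win_low (hn : 1 ≤ n) {a : ℕ} (h1 : 1 ≤ a) (h2 : a ≤ 2*n) :
    ∑ l ∈ Finset.range (2*n), PS n (a + l) = -(2*n : ℂ) := by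
  rw [Finset.sum_eq_single_of_mem (2*n - a) (by simp [Finset.mem_range]; omega)]
  · rw [show a + (2*n - a) = 2*n*1 by omega, PS_dvd n hn 1]
    simp
  · intro l hl hne
    rw [Finset.mem_range] at hl
    apply PS_not_dvd n hn
    rintro ⟨c, hc⟩
    have hc0 : c ≠ 0 := by rintro rfl; omega
    have hc2 : c < 2 := by
      by_contra h'
      push_neg at h'
      have : 2*n*2 ≤ 2*n*c := Nat.mul_le_mul_left _ h'
      omega
    have : c = 1 := by omega
    subst this
    omega

lemma win_high (hn : 1 ≤ n) {a : ℕ} (h1 : 2*n+1 ≤ a) (h2 : a ≤ 4*n) :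
    ∑ l ∈ Finset.range (2*n), PS n (a + l) = (2*n : ℂ) := by
  rw [Finset.sum_eq_single_of_mem (4*n - a) (by simp [Finset.mem_range]; omega)]
  · rw [show a + (4*n - a) = 2*n*2 by omega, PS_dvd n hn 2]
    simp
  · intro l hl hne
    rw [Finset.mem_range] at hl
    apply PS_not_dvd n hn
    rintro ⟨c, hc⟩
    have hc0 : 2 ≤ c := by
      by_contra h'
      push_neg at h'
      interval_cases c <;> omega
    have hc2 : c < 3 := by
      by_contra h'
      push_neg at h'
      have : 2*n*3 ≤ 2*n*c := Nat.mul_le_mul_left _ h'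
      omega
    have : c = 2 := by omega
    subst this
    omega

lemma key_id (hn : 1 ≤ n) {q : ℕ} (hq1 : 1 ≤ q) (hq2 : q ≤ 2*n+1) :
    ∑ k ∈ Finset.range (2*n), ww n k ^ q * (Sw n k)^2
      = 4 * (n:ℂ) * ((q:ℂ) - n - 1) := by
  have expand : ∀ k, ww n k ^ q * (Sw n k)^2
      = ∑ j ∈ Finset.range (2*n), ∑ l ∈ Finset.range (2*n), ww n k ^ (q + j + l) := by
    intro k
    rw [Sw, sq, Finset.sum_mul_sum, Finset.mul_sum]
    refine Finset.sum_congr rfl fun j _ => ?_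
    rw [Finset.mul_sum]
    refine Finset.sum_congr rfl fun l _ => ?_
    rw [pow_add, pow_add]
    ring
  simp only [expand]
  have swap : (∑ k ∈ Finset.range (2*n), ∑ j ∈ Finset.range (2*n),
        ∑ l ∈ Finset.range (2*n), ww n k ^ (q+j+l))
      = ∑ j ∈ Finset.range (2*n), ∑ l ∈ Finset.range (2*n), PS n (q+j+l) := by
    rw [Finset.sum_comm]
    refine Finset.sum_congr rfl fun j _ => ?_
    rw [Finset.sum_comm]
    rfl
  rw [swap]
  have hm : 2*n + 1 - q ≤ 2*n := by omega
  rw [← Finset.sum_range_add_sum_Ico _ hm]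
  have hlow : ∑ j ∈ Finset.range (2*n+1-q), ∑ l ∈ Finset.range (2*n), PS n (q+j+l)
      = (2*n+1-q : ℕ) • (-(2*n : ℂ)) := by
    have h : ∀ j ∈ Finset.range (2*n+1-q),
        (∑ l ∈ Finset.range (2*n), PS n (q+j+l)) = -(2*n : ℂ) := by
      intro j hj
      rw [Finset.mem_range] at hj
      exact win_low n hn (by omega) (by omega)
    rw [Finset.sum_congr rfl h, Finset.sum_const, Finset.card_range]
  have hhigh : ∑ j ∈ Finset.Ico (2*n+1-q) (2*n), ∑ l ∈ Finset.range (2*n), PS n (q+j+l)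
      = (2*n - (2*n+1-q) : ℕ) • ((2*n : ℂ)) := by
    have h : ∀ j ∈ Finset.Ico (2*n+1-q) (2*n),
        (∑ l ∈ Finset.range (2*n), PS n (q+j+l)) = (2*n : ℂ) := by
      intro j hj
      rw [Finset.mem_Ico] at hj
      exact win_high n hn (by omega) (by omega)
    rw [Finset.sum_congr rfl h, Finset.sum_const, Nat.card_Ico]
  rw [hlow, hhigh]
  simp only [nsmul_eq_mul]
  push_cast [Nat.cast_sub hm, Nat.cast_sub hq2]
  ring

lemma Sw_mul (hn : 1 ≤ n) (k : ℕ) : (ww n k - 1) * Sw n k = -2 := by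
  rw [Sw, mul_comm, geom_sum_mul, ww_pow_2n n hn]
  ring

lemma ww_ne_zero (k : ℕ) : ww n k ≠ 0 := Complex.exp_ne_zero _

lemma Sw_ne_zero (hn : 1 ≤ n) (k : ℕ) : Sw n k ≠ 0 := by
  intro h
  have := Sw_mul n hn k
  rw [h, mul_zero] at this
  norm_num at this

lemma ww_sub_one_ne_zero (hn : 1 ≤ n) (k : ℕ) : ww n k - 1 ≠ 0 := by
  intro h
  have := Sw_mul n hn k
  rw [h, zero_mul] at this
  norm_num at this

lemma sin_pos (hn : 1 ≤ n) {k : ℕ} (hk : k < 2*n) : 0 < Real.sin (xx n k / 2) := by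
  apply Real.sin_pos_of_pos_of_lt_pi
  · rw [xx]
    have : (0:ℝ) < (n:ℝ) := by positivity
    positivity
  · rw [xx]
    rw [div_div]
    rw [div_lt_iff₀ (by positivity)]
    have hklt : (2*(k:ℝ)+1) < 4*(n:ℝ) := by
      have : ((k:ℝ) + 1) ≤ 2*n := by exact_mod_cast hk
      linarith
    nlinarith [Real.pi_pos]

lemma sin_sq (k : ℕ) :
    ((Real.sin (xx n k / 2) : ℂ))^2 * (4 * ww n k) = -((ww n k - 1)^2) := by
  set u : ℂ := Complex.exp (I * (xx n k / 2 : ℝ)) with hu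
  have hu0 : u ≠ 0 := Complex.exp_ne_zero _
  have hu2 : u^2 = ww n k := by
    rw [hu, ww, ← Complex.exp_nat_mul]
    congr 1
    push_cast
    ring
  have e1 : Complex.exp (-(xx n k / 2 : ℝ) * I) = u⁻¹ := by
    rw [hu, ← Complex.exp_neg]
    congr 1
    ring
  have e2 : Complex.exp ((xx n k / 2 : ℝ) * I) = u := by
    rw [hu]
    congr 1
    ring
  have hsin : ((Real.sin (xx n k / 2) : ℂ)) = (u⁻¹ - u) * I / 2 := by
    rw [Complex.ofReal_sin, Complex.sin, e1, e2]
  rw [hsin, ← hu2]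
  have h3 : (u⁻¹ - u) * u = 1 - u^2 := by
    field_simp
  calc ((u⁻¹ - u) * I / 2)^2 * (4 * u^2) = -(((u⁻¹ - u) * u)^2) := by
        rw [div_pow, mul_pow, mul_pow, Complex.I_sq]; ring
    _ = -((1 - u^2)^2) := by rw [h3]
    _ = -((u^2 - 1)^2) := by ring

def em (m θ : ℝ) : ℂ := Complex.exp (I * m * θ)

def AA (k : ℕ) : ℝ := ((-1:ℝ))^k / (4*n*(Real.sin (xx n k / 2))^2)

lemma AA_complex (hn : 1 ≤ n) {k : ℕ} (hk : k < 2*n) :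
    (AA n k : ℂ) = I/(4*n) * ww n k^(n+1) * (Sw n k)^2 := by
  have hs0 : Real.sin (xx n k / 2) ≠ 0 := (sin_pos n hn hk).ne'
  have hsC : ((Real.sin (xx n k / 2) : ℝ) : ℂ) ≠ 0 := Complex.ofReal_ne_zero.mpr hs0
  have hn' : (n : ℂ) ≠ 0 := Nat.cast_ne_zero.mpr (by omega)
  have F1 := sin_sq n k
  have F2 := Sw_mul n hn k
  have e2 : (ww n k - 1)^2 * (Sw n k)^2 = 4 := by
    calc (ww n k-1)^2 * (Sw n k)^2 = ((ww n k-1)*(Sw n k))^2 := by ring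
      _ = 4 := by rw [F2]; norm_num
  have e3 : ((-1:ℂ))^k = -I * ww n k^n := by
    rw [ww_pow_n n hn k, ← mul_assoc]
    simp [Complex.I_mul_I]
  have e4 : ((4*(n:ℂ)*((Real.sin (xx n k / 2) : ℝ):ℂ)^2)) * (ww n k * (Sw n k)^2) = -4*n := by
    calc (4*(n:ℂ)*((Real.sin (xx n k / 2) : ℝ):ℂ)^2) * (ww n k * (Sw n k)^2)
        = (n:ℂ) * ((((Real.sin (xx n k / 2) : ℝ):ℂ)^2 * (4 * ww n k)) * (Sw n k)^2) := by ring
      _ = (n:ℂ) * ((-((ww n k-1)^2)) * (Sw n k)^2) := by rw [F1]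
      _ = -((n:ℂ) * ((ww n k-1)^2 * (Sw n k)^2)) := by ring
      _ = -((n:ℂ) * 4) := by rw [e2]
      _ = -4*n := by ring
  have hden : (4*(n:ℂ)*((Real.sin (xx n k / 2) : ℝ):ℂ)^2) ≠ 0 := by
    intro h
    rcases mul_eq_zero.mp h with h' | h'
    · rcases mul_eq_zero.mp h' with h'' | h''
      · norm_num at h''
      · exact hn' h''
    · exact hsC (pow_eq_zero_iff (by norm_num) |>.mp h')
  have hcast : (AA n k : ℂ)
      = ((-1:ℂ))^k / (4*(n:ℂ)*((Real.sin (xx n k / 2) : ℝ):ℂ)^2) := by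
    rw [AA]
    push_cast [-Complex.ofReal_sin]
    ring
  rw [hcast, div_eq_iff hden]
  have step : I/(4*(n:ℂ))*(ww n k)^(n+1)*(Sw n k)^2*(4*n*((Real.sin (xx n k / 2) : ℝ):ℂ)^2)
      = I * (ww n k)^n * ((4*(n:ℂ)*((Real.sin (xx n k / 2) : ℝ):ℂ)^2) * (ww n k * (Sw n k)^2)) / (4*n) := by
    rw [pow_succ]
    ring
  rw [step, e4, e3]
  field_simp

lemma Riesz_term (hn : 1 ≤ n) {k : ℕ} (hk : k < 2*n) (m : ℝ) (q : ℕ)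
    (hq : (m:ℂ) + n + 1 = q) :
    (AA n k : ℂ) * em m (xx n k) = I/(4*n) * ww n k ^ q * (Sw n k)^2 := by
  rw [AA_complex n hn hk, em]
  have h1 : ww n k ^ (n+1) * Complex.exp (I * m * (xx n k)) = ww n k ^ q := by
    rw [ww, ← Complex.exp_nat_mul, ← Complex.exp_nat_mul, ← Complex.exp_add]
    congr 1
    push_cast
    linear_combination (I * ((xx n k : ℝ) : ℂ)) * hq
  calc I/(4*(n:ℂ)) * ww n k^(n+1) * (Sw n k)^2 * Complex.exp (I * ↑m * (xx n k))
      = I/(4*(n:ℂ)) * (ww n k^(n+1) * Complex.exp (I * m * (xx n k))) * (Sw n k)^2 := by ring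
    _ = I/(4*(n:ℂ)) * ww n k ^ q * (Sw n k)^2 := by rw [h1]

lemma Riesz_coef (hn : 1 ≤ n) {j s : ℕ} (hj : j ≤ n) (hs : s ≤ n) :
    ∑ k ∈ Finset.range (2*n), (AA n k : ℂ) * em ((j:ℝ) - s) (xx n k)
      = I * ((j:ℂ) - s) := by
  have hn' : (n : ℂ) ≠ 0 := Nat.cast_ne_zero.mpr (by omega)
  obtain ⟨q, hqdef⟩ : ∃ q : ℕ, q = j + (n + 1 - s) := ⟨_, rfl⟩
  have hs' : s ≤ n + 1 := by omega
  have hz : (q:ℤ) = (j:ℤ) + n + 1 - s := by omega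
  have hzc : (q:ℂ) = (j:ℂ) + n + 1 - s := by
    have := congrArg (fun z : ℤ => (z:ℂ)) hz
    push_cast at this
    exact this
  have hqc : ((((j:ℝ) - s : ℝ)):ℂ) + n + 1 = q := by
    rw [hzc]
    push_cast
    ring
  have hterm : ∀ k ∈ Finset.range (2*n),
      (AA n k : ℂ) * em ((j:ℝ) - s) (xx n k)
        = I/(4*(n:ℂ)) * ww n k ^ q * (Sw n k)^2 := by
    intro k hk
    rw [Finset.mem_range] at hk
    exact Riesz_term n hn hk ((j:ℝ) - (s:ℝ)) q hqc
  rw [Finset.sum_congr rfl hterm]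
  have hpull : ∑ k ∈ Finset.range (2*n), I/(4*(n:ℂ)) * ww n k ^ q * (Sw n k)^2
      = I/(4*(n:ℂ)) * ∑ k ∈ Finset.range (2*n), ww n k ^ q * (Sw n k)^2 := by
    rw [Finset.mul_sum]
    exact Finset.sum_congr rfl fun k _ => by ring
  rw [hpull, key_id n hn (by omega) (by omega)]
  rw [hzc]
  field_simp
  ring

lemma sum_A_complex (hn : 1 ≤ n) :
    ∑ k ∈ Finset.range (2*n), ((-1:ℂ))^k * (AA n k : ℂ) = (n:ℂ) := by
  have hn' : (n : ℂ) ≠ 0 := Nat.cast_ne_zero.mpr (by omega)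
  have hterm : ∀ k ∈ Finset.range (2*n),
      ((-1:ℂ))^k * (AA n k : ℂ) = 1/(4*(n:ℂ)) * (ww n k ^ (2*n+1) * (Sw n k)^2) := by
    intro k hk
    rw [Finset.mem_range] at hk
    have e3 : ((-1:ℂ))^k = -I * ww n k^n := by
      rw [ww_pow_n n hn k, ← mul_assoc]
      simp [Complex.I_mul_I]
    rw [AA_complex n hn hk, e3]
    have hpow : ww n k ^ (2*n+1) = ww n k ^ n * ww n k ^ (n+1) := by
      rw [← pow_add]
      congr 1
      omega
    rw [hpow]
    linear_combination (-(ww n k^n * ww n k^(n+1) * (Sw n k)^2)/(4*(n:ℂ))) * Complex.I_sq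
  rw [Finset.sum_congr rfl hterm, ← Finset.mul_sum, key_id n hn (by omega) (by omega)]
  push_cast
  field_simp
  ring

lemma sum_abs_AA (hn : 1 ≤ n) : ∑ k ∈ Finset.range (2*n), |AA n k| = (n:ℝ) := by
  have habs : ∀ k ∈ Finset.range (2*n), |AA n k| = ((-1:ℝ))^k * AA n k := by
    intro k hk
    rw [Finset.mem_range] at hk
    have hn0 : (0:ℝ) < n := by exact_mod_cast Nat.pos_of_ne_zero (by omega)
    have hsp := sin_pos n hn hk
    have hpos : 0 < 4*(n:ℝ)*(Real.sin (xx n k / 2))^2 := by positivity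
    rw [AA, _root_.abs_div, _root_.abs_pow, _root_.abs_neg, _root_.abs_one, one_pow, _root_.abs_of_pos hpos]
    rw [show ((-1:ℝ))^k * ((-1:ℝ)^k / (4*(n:ℝ)*(Real.sin (xx n k / 2))^2))
        = ((-1:ℝ)^k)^2 / (4*(n:ℝ)*(Real.sin (xx n k / 2))^2) by ring]
    rw [← pow_mul, mul_comm k 2, pow_mul, neg_one_sq, one_pow]
  rw [Finset.sum_congr rfl habs]
  exact_mod_cast sum_A_complex n hn

/-! ### Trigonometric layer -/

lemma continuous_em (m : ℝ) : Continuous (em m) := by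
  unfold em
  exact Complex.continuous_exp.comp (continuous_const.mul Complex.continuous_ofReal)

lemma em_freq_congr {m₁ m₂ : ℝ} (h : m₁ = m₂) (θ : ℝ) : em m₁ θ = em m₂ θ := by rw [h]

lemma em_arg_add (m a b : ℝ) : em m (a + b) = em m a * em m b := by
  rw [em, em, em, ← Complex.exp_add]
  congr 1
  push_cast
  ring

lemma em_freq_add (m₁ m₂ θ : ℝ) : em (m₁ + m₂) θ = em m₁ θ * em m₂ θ := by
  rw [em, em, em, ← Complex.exp_add]
  congr 1
  push_cast
  ring

lemma em_zero (θ : ℝ) : em 0 θ = 1 := by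
  rw [em]
  norm_num

lemma em_one (θ : ℝ) : em 1 θ = Complex.exp (I * θ) := by
  rw [em]
  norm_num

lemma em_nat (j : ℕ) (θ : ℝ) : em (j:ℝ) θ = Complex.exp (I * θ) ^ j := by
  rw [em, ← Complex.exp_nat_mul]
  congr 1
  push_cast
  ring

lemma abs_em (m θ : ℝ) : ‖em m θ‖ = 1 := by
  rw [em]
  have h : (I : ℂ) * (m:ℂ) * (θ:ℂ) = ((m*θ : ℝ):ℂ) * I := by push_cast; ring
  rw [h, Complex.norm_exp]
  simp

lemma em_int_periodic (z : ℤ) (θ : ℝ) : em (z:ℝ) (θ + 2*π) = em (z:ℝ) θ := by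
  rw [em, em]
  have h : (I : ℂ) * ((z:ℝ):ℂ) * ((θ + 2*π : ℝ):ℂ)
      = I * ((z:ℝ):ℂ) * (θ:ℂ) + (z:ℂ) * (2*(π:ℂ)*I) := by push_cast; ring
  rw [h, Complex.exp_add, Complex.exp_int_mul_two_pi_mul_I, mul_one]

def Ftrig (c : ℕ → ℂ) (s : ℕ) : ℝ → ℂ :=
  fun θ => ∑ j ∈ Finset.range (n+1), c j * em ((j:ℝ) - s) θ

def Gtrig (c : ℕ → ℂ) (s : ℕ) : ℝ → ℂ :=
  fun θ => ∑ j ∈ Finset.range (n+1), c j * (I * ((j:ℂ) - s)) * em ((j:ℝ) - s) θ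

lemma Ftrig_continuous (c : ℕ → ℂ) (s : ℕ) : Continuous (Ftrig n c s) := by
  unfold Ftrig
  exact continuous_finset_sum _ fun j _ => continuous_const.mul (continuous_em _)

lemma Gtrig_continuous (c : ℕ → ℂ) (s : ℕ) : Continuous (Gtrig n c s) := by
  unfold Gtrig
  exact continuous_finset_sum _ fun j _ => continuous_const.mul (continuous_em _)

lemma Ftrig_periodic (c : ℕ → ℂ) (s : ℕ) : Function.Periodic (Ftrig n c s) (2*π) := by
  intro θ
  unfold Ftrig
  refine Finset.sum_congr rfl fun j _ => ?_
  have h : ((j:ℝ) - s) = (((j:ℤ) - s : ℤ) : ℝ) := by push_cast; ring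
  rw [em_freq_congr h, em_freq_congr h, em_int_periodic]

lemma Gtrig_eq_sum (hn : 1 ≤ n) (c : ℕ → ℂ) {s : ℕ} (hs : s ≤ n) (θ : ℝ) :
    Gtrig n c s θ = ∑ k ∈ Finset.range (2*n), (AA n k : ℂ) * Ftrig n c s (θ + xx n k) := by
  have step1 : ∀ k, (AA n k : ℂ) * Ftrig n c s (θ + xx n k)
      = ∑ j ∈ Finset.range (n+1),
          c j * em ((j:ℝ) - s) θ * ((AA n k : ℂ) * em ((j:ℝ) - s) (xx n k)) := by
    intro k
    rw [Ftrig, Finset.mul_sum]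
    refine Finset.sum_congr rfl fun j _ => ?_
    rw [em_arg_add]
    ring
  rw [Finset.sum_congr rfl fun k _ => step1 k, Finset.sum_comm]
  rw [Gtrig]
  refine Finset.sum_congr rfl fun j hj => ?_
  rw [Finset.mem_range] at hj
  rw [← Finset.mul_sum, Riesz_coef n hn (by omega) hs]
  ring

lemma bern (hn : 1 ≤ n) (c : ℕ → ℂ) {s : ℕ} (hs : s ≤ n) {p : ℝ} (hp : 1 ≤ p) :
    Np p (Gtrig n c s) ≤ (n:ℝ) * Np p (Ftrig n c s) := by
  have hfun : Gtrig n c s = fun θ => ∑ k ∈ Finset.range (2*n),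
      (AA n k : ℂ) * Ftrig n c s (θ + xx n k) :=
    funext fun θ => Gtrig_eq_sum n hn c hs θ
  rw [hfun]
  refine le_trans (Np_sum_le (Finset.range (2*n))
    (fun k θ => (AA n k : ℂ) * Ftrig n c s (θ + xx n k))
    (fun k => continuous_const.mul ((Ftrig_continuous n c s).comp
      (continuous_id.add continuous_const))) hp) ?_
  have heach : ∀ k ∈ Finset.range (2*n),
      Np p (fun θ => (AA n k : ℂ) * Ftrig n c s (θ + xx n k))
        = |AA n k| * Np p (Ftrig n c s) := by
    intro k _
    rw [Np_smul hp, Complex.norm_real, Real.norm_eq_abs, Np_translate (Ftrig_periodic n c s) _]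
  rw [Finset.sum_congr rfl heach, ← Finset.sum_mul, sum_abs_AA n hn]

/-! ### Polynomial identities -/

lemma eval_sum_range {P : Polynomial ℂ} (hP : P.natDegree = n) (z : ℂ) :
    P.eval z = ∑ j ∈ Finset.range (n+1), P.coeff j * z^j := by
  conv_lhs => rw [Polynomial.eval_eq_sum_range]
  rw [hP]

lemma E2 {P : Polynomial ℂ} (hn : 1 ≤ n) (hP : P.natDegree = n) (z : ℂ) :
    ∑ j ∈ Finset.range (n+1), (j:ℂ) * P.coeff j * z^j
      = z * (Polynomial.derivative P).eval z := by
  have hd : (Polynomial.derivative P).natDegree < n + 1 := by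
    have h := Polynomial.natDegree_derivative_le P
    rw [hP] at h
    omega
  have hR : z * (Polynomial.derivative P).eval z
      = ∑ i ∈ Finset.range (n+1), ((i:ℂ)+1) * P.coeff (i+1) * z^(i+1) := by
    rw [Polynomial.eval_eq_sum_range' hd, Finset.mul_sum]
    refine Finset.sum_congr rfl fun i _ => ?_
    rw [Polynomial.coeff_derivative]
    push_cast
    ring
  have hL : ∑ j ∈ Finset.range (n+1), (j:ℂ) * P.coeff j * z^j
      = ∑ i ∈ Finset.range n, ((i:ℂ)+1) * P.coeff (i+1) * z^(i+1) := by
    rw [Finset.sum_range_succ']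
    push_cast
    simp
  rw [hL, hR, Finset.sum_range_succ]
  have hc0 : P.coeff (n+1) = 0 := Polynomial.coeff_eq_zero_of_natDegree_lt (by omega)
  rw [hc0]
  simp

lemma main_pointwise (hn : 1 ≤ n) {P : Polynomial ℂ} (hP : P.natDegree = n) (α : ℂ) (θ : ℝ) :
    (n : ℂ) * P.eval (Complex.exp (I * θ)) +
        (α - Complex.exp (I * θ)) * (Polynomial.derivative P).eval (Complex.exp (I * θ))
      = (I * em (n:ℝ) θ) * Gtrig n (fun j => P.coeff j) n θ
        + ((-I * α) * em (-1:ℝ) θ) * Gtrig n (fun j => P.coeff j) 0 θ := by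
  set z := Complex.exp (I * θ) with hz
  set c : ℕ → ℂ := fun j => P.coeff j with hc
  have hzj : ∀ j : ℕ, em ((j:ℝ)) θ = z ^ j := fun j => em_nat j θ
  have hGn : (I * em (n:ℝ) θ) * Gtrig n c n θ
      = (n:ℂ) * P.eval z - z * (Polynomial.derivative P).eval z := by
    have h1 : (I * em (n:ℝ) θ) * Gtrig n c n θ
        = ∑ j ∈ Finset.range (n+1),
            c j * ((I*I) * ((j:ℂ) - n)) * (em (n:ℝ) θ * em ((j:ℝ) - n) θ) := by
      rw [Gtrig, Finset.mul_sum]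
      exact Finset.sum_congr rfl fun j _ => by ring
    have h2 : ∀ j : ℕ, em (n:ℝ) θ * em ((j:ℝ) - n) θ = z ^ j := by
      intro j
      rw [← em_freq_add]
      rw [em_freq_congr (show (n:ℝ) + ((j:ℝ) - n) = (j:ℝ) by ring), hzj]
    have h3 : (I * em (n:ℝ) θ) * Gtrig n c n θ
        = (n:ℂ) * (∑ j ∈ Finset.range (n+1), c j * z^j)
          - (∑ j ∈ Finset.range (n+1), (j:ℂ) * c j * z^j) := by
      rw [h1, Finset.mul_sum, ← Finset.sum_sub_distrib]
      refine Finset.sum_congr rfl fun j _ => ?_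
      rw [h2 j, Complex.I_mul_I]
      ring
    rw [h3, ← eval_sum_range n hP, E2 n hn hP]
  have hG0 : Gtrig n c 0 θ = I * (z * (Polynomial.derivative P).eval z) := by
    have h1 : Gtrig n c 0 θ = I * ∑ j ∈ Finset.range (n+1), (j:ℂ) * c j * z^j := by
      rw [Gtrig, Finset.mul_sum]
      refine Finset.sum_congr rfl fun j _ => ?_
      rw [em_freq_congr (show ((j:ℝ) - (0:ℕ)) = (j:ℝ) by push_cast; ring), hzj]
      push_cast
      ring
    rw [h1, E2 n hn hP]
  have h01 : em (-1:ℝ) θ * z = 1 := by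
    rw [hz, ← em_one, ← em_freq_add]
    rw [em_freq_congr (show (-1:ℝ) + 1 = 0 by ring), em_zero]
  have hH2 : ((-I * α) * em (-1:ℝ) θ) * Gtrig n c 0 θ
      = α * (Polynomial.derivative P).eval z := by
    rw [hG0]
    calc ((-I * α) * em (-1:ℝ) θ) * (I * (z * (Polynomial.derivative P).eval z))
        = (α * (Polynomial.derivative P).eval z) * ((em (-1:ℝ) θ * z) * (-(I*I))) := by ring
      _ = α * (Polynomial.derivative P).eval z := by
          rw [h01, Complex.I_mul_I]
          ring
  rw [hGn, hH2]
  ring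

end PolarAux
end

theorem theorem1_polar_Lp (n : ℕ) (hn : 1 ≤ n) (P : Polynomial ℂ)
    (hP : P.natDegree = n) (α : ℂ) (p : ℝ) (hp : 1 ≤ p) :
    (∫ θ in (0:ℝ)..(2 * π),
        (‖(n : ℂ) * P.eval (Complex.exp (I * θ)) +
          (α - Complex.exp (I * θ)) * (derivative P).eval (Complex.exp (I * θ))‖) ^ p)
        ^ (1 / p)
      ≤ (n : ℝ) * (‖α‖ + 1) *
        (∫ θ in (0:ℝ)..(2 * π), (‖P.eval (Complex.exp (I * θ))‖) ^ p)
          ^ (1 / p) := by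
  classical
  set c : ℕ → ℂ := fun j => P.coeff j with hc
  have hF0 : (PolarAux.Ftrig n c 0) = fun θ : ℝ => P.eval (Complex.exp (I * θ)) := by
    funext θ
    rw [PolarAux.Ftrig, PolarAux.eval_sum_range n hP]
    refine Finset.sum_congr rfl fun j _ => ?_
    rw [PolarAux.em_freq_congr (show ((j:ℝ) - ((0:ℕ):ℝ)) = (j:ℝ) by push_cast; ring) θ,
      PolarAux.em_nat]
  have hmain : (fun θ : ℝ => (n:ℂ) * P.eval (Complex.exp (I * θ))
        + (α - Complex.exp (I * θ)) * (derivative P).eval (Complex.exp (I * θ)))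
      = fun θ : ℝ => ((I * PolarAux.em (n:ℝ) θ) * PolarAux.Gtrig n c n θ)
        + (((-I * α) * PolarAux.em (-1:ℝ) θ) * PolarAux.Gtrig n c 0 θ) :=
    funext fun θ => PolarAux.main_pointwise n hn hP α θ
  show Np p (fun θ : ℝ => (n:ℂ) * P.eval (Complex.exp (I * θ))
        + (α - Complex.exp (I * θ)) * (derivative P).eval (Complex.exp (I * θ)))
      ≤ (n : ℝ) * (‖α‖ + 1) * Np p (fun θ : ℝ => P.eval (Complex.exp (I * θ)))
  rw [hmain]
  have hcGn := PolarAux.Gtrig_continuous n c n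
  have hcG0 := PolarAux.Gtrig_continuous n c 0
  have hH1c : Continuous (fun θ : ℝ => (I * PolarAux.em (n:ℝ) θ) * PolarAux.Gtrig n c n θ) :=
    (continuous_const.mul (PolarAux.continuous_em _)).mul hcGn
  have hH2c : Continuous
      (fun θ : ℝ => ((-I * α) * PolarAux.em (-1:ℝ) θ) * PolarAux.Gtrig n c 0 θ) :=
    (continuous_const.mul (PolarAux.continuous_em _)).mul hcG0
  have step1 := Np_add_le hH1c hH2c hp
  have e1 : Np p (fun θ : ℝ => (I * PolarAux.em (n:ℝ) θ) * PolarAux.Gtrig n c n θ)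
      = Np p (PolarAux.Gtrig n c n) :=
    Np_congr_abs fun θ => by
      simp [norm_mul, Complex.norm_I, PolarAux.abs_em]
  have e2 : Np p (fun θ : ℝ => ((-I * α) * PolarAux.em (-1:ℝ) θ) * PolarAux.Gtrig n c 0 θ)
      = ‖α‖ * Np p (PolarAux.Gtrig n c 0) := by
    have h := Np_congr_abs (p := p)
      (F := fun θ : ℝ => ((-I * α) * PolarAux.em (-1:ℝ) θ) * PolarAux.Gtrig n c 0 θ)
      (G := fun θ : ℝ => α * PolarAux.Gtrig n c 0 θ)
      (fun θ => by simp [norm_mul, Complex.norm_I, PolarAux.abs_em])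
    rw [h, Np_smul hp]
  have b1 := PolarAux.bern n hn c (le_refl n) hp
  have b2 := PolarAux.bern n hn c (Nat.zero_le n) hp
  have eF : Np p (PolarAux.Ftrig n c n) = Np p (PolarAux.Ftrig n c 0) := by
    refine Np_congr_abs fun θ => ?_
    have hFF : PolarAux.Ftrig n c n θ = PolarAux.em (-(n:ℝ)) θ * PolarAux.Ftrig n c 0 θ := by
      rw [PolarAux.Ftrig, PolarAux.Ftrig, Finset.mul_sum]
      refine Finset.sum_congr rfl fun j _ => ?_
      rw [PolarAux.em_freq_congr
        (show ((j:ℝ) - ((n:ℕ):ℝ)) = (-(n:ℝ)) + ((j:ℝ) - ((0:ℕ):ℝ)) by push_cast; ring) θ,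
        PolarAux.em_freq_add]
      ring
    rw [hFF, norm_mul, PolarAux.abs_em, one_mul]
  have hF0' : Np p (PolarAux.Ftrig n c 0)
      = Np p (fun θ : ℝ => P.eval (Complex.exp (I * θ))) := by rw [hF0]
  have hNn : (0:ℝ) ≤ Np p (PolarAux.Ftrig n c 0) := Np_nonneg _
  calc Np p (fun θ : ℝ => ((I * PolarAux.em (n:ℝ) θ) * PolarAux.Gtrig n c n θ)
        + (((-I * α) * PolarAux.em (-1:ℝ) θ) * PolarAux.Gtrig n c 0 θ))
      ≤ Np p (fun θ : ℝ => (I * PolarAux.em (n:ℝ) θ) * PolarAux.Gtrig n c n θ)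
        + Np p (fun θ : ℝ => ((-I * α) * PolarAux.em (-1:ℝ) θ) * PolarAux.Gtrig n c 0 θ) := step1
    _ = Np p (PolarAux.Gtrig n c n) + ‖α‖ * Np p (PolarAux.Gtrig n c 0) := by
        rw [e1, e2]
    _ ≤ (n:ℝ) * Np p (PolarAux.Ftrig n c n)
        + ‖α‖ * ((n:ℝ) * Np p (PolarAux.Ftrig n c 0)) :=
        add_le_add b1 (mul_le_mul_of_nonneg_left b2 (norm_nonneg α))
    _ = (n:ℝ) * (‖α‖ + 1) * Np p (PolarAux.Ftrig n c 0) := by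
        rw [eF]; ring
    _ = (n : ℝ) * (‖α‖ + 1) * Np p (fun θ : ℝ => P.eval (Complex.exp (I * θ))) := by
        rw [hF0']
end

section
/- If P is a polynomial of degree n with P(z) ≠ 0 for |z| < 1 and Q(z) = z^n·conj(P(1/conj(z))), then for every complex α with |α| ≥ 1 and every z with |z| = 1, the ratio |D_α Q(z)| / |D_α P(z)| ≥ 1 whenever D_α P(z) ≠ 0. -/
open Polynomial Complex

lemma aux_re_le_half (z r : ℂ) (hz : ‖z‖ = 1) (hr : 1 ≤ ‖r‖)
    (h : z - r ≠ 0) : (z / (z - r)).re ≤ 1 / 2 := by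
  set w := z / (z - r) with hw
  have h1 : ‖w‖ ≤ ‖1 - w‖ := by
    have he : 1 - w = -r / (z - r) := by rw [hw, eq_div_iff h, sub_mul, div_mul_cancel₀ _ h]; ring
    have hpos := norm_pos_iff.mpr h
    rw [he, hw, norm_div, norm_div, hz, norm_neg]
    exact div_le_div_of_nonneg_right hr hpos.le
  have h2 : normSq w ≤ normSq (1 - w) := by
    rw [← Complex.sq_norm, ← Complex.sq_norm]
    exact pow_le_pow_left₀ (norm_nonneg _) h1 2
  rw [Complex.normSq_sub] at h2
  simp [Complex.normSq_one] at h2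
  nlinarith [h2]

lemma aux_logderiv (s : Multiset ℂ) (hs : ∀ r ∈ s, 1 ≤ ‖r‖) :
    ∀ z : ℂ, ‖z‖ = 1 →
      (Multiset.map (fun r => X - C r) s).prod.eval z ≠ 0 →
      (z * (derivative (Multiset.map (fun r => X - C r) s).prod).eval z /
        (Multiset.map (fun r => X - C r) s).prod.eval z).re ≤ (s.card : ℝ) / 2 := by
  induction s using Multiset.induction_on with
  | empty => intro z hz h0; simp
  | cons a s ih =>
    intro z hz h0
    rw [Multiset.map_cons, Multiset.prod_cons] at h0 ⊢
    rw [derivative_mul, eval_add, eval_mul, eval_mul, eval_mul] at *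
    have h1 : eval z (X - C a) ≠ 0 := fun h => h0 (by rw [h, zero_mul])
    have h2 : eval z (Multiset.map (fun r => X - C r) s).prod ≠ 0 :=
      fun h => h0 (by rw [h, mul_zero])
    have h1' : z - a ≠ 0 := by simpa using h1
    have key : z * (eval z (derivative (X - C a)) * eval z (Multiset.map (fun r => X - C r) s).prod
        + eval z (X - C a) * eval z (derivative (Multiset.map (fun r => X - C r) s).prod)) /
        (eval z (X - C a) * eval z (Multiset.map (fun r => X - C r) s).prod)
        = z / (z - a) + z * eval z (derivative (Multiset.map (fun r => X - C r) s).prod) /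
           eval z (Multiset.map (fun r => X - C r) s).prod := by
      simp only [derivative_sub, derivative_X, derivative_C, sub_zero, eval_one, eval_sub,
        eval_X, eval_C]
      field_simp
    rw [key, Complex.add_re, Multiset.card_cons]
    push_cast
    have hra : 1 ≤ ‖a‖ := hs a (Multiset.mem_cons_self a s)
    have := aux_re_le_half z a hz hra h1'
    have := ih (fun r hr => hs r (Multiset.mem_cons_of_mem hr)) z hz h2
    linarith
lemma aux_key1 (n : ℕ) (hn : 1 ≤ n) (P : Polynomial ℂ) (hP : P.natDegree = n)
    (hPz : ∀ z : ℂ, ‖z‖ < 1 → P.eval z ≠ 0) (z : ℂ) (hz : ‖z‖ = 1) :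
    ‖(derivative P).eval z‖ ≤
      ‖(n : ℂ) * P.eval z - z * (derivative P).eval z‖ := by
  have hP0 : P ≠ 0 := fun h => by simp [h] at hP; omega
  by_cases hvz : P.eval z = 0
  · rw [hvz, mul_zero, zero_sub, norm_neg, norm_mul, hz, one_mul]
  -- factor P
  have hsplit : Splits P := IsAlgClosed.splits P
  have hfac := hsplit.eq_prod_roots
  have hcard : P.roots.card = n := by
    have := (hsplit.natDegree_eq_card_roots).symm
    rwa [hP] at this
  have hroots : ∀ r ∈ P.roots, 1 ≤ ‖r‖ := by
    intro r hr
    by_contra hlt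
    exact hPz r (not_le.mp hlt) ((mem_roots hP0).mp hr)
  set c := P.leadingCoeff with hc
  have hc0 : c ≠ 0 := leadingCoeff_ne_zero.mpr hP0
  set p := (Multiset.map (fun a => X - C a) P.roots).prod with hp
  have hfac' : P = C c * p := hfac
  have hev : P.eval z = c * p.eval z := by rw [hfac']; simp
  have hder : (derivative P).eval z = c * (derivative p).eval z := by
    rw [hfac', derivative_mul]; simp
  have hpz : p.eval z ≠ 0 := by
    intro h; exact hvz (by rw [hev, h, mul_zero])
  have hre : (z * (derivative p).eval z / p.eval z).re ≤ (n : ℝ) / 2 := by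
    have := aux_logderiv P.roots hroots z hz hpz
    rwa [hcard] at this
  set w := z * (derivative p).eval z / p.eval z with hw
  have habs1 : ‖(derivative P).eval z‖ = ‖w‖ * ‖P.eval z‖ := by
    rw [hev, hder, hw, norm_mul, norm_mul, norm_div, norm_mul, hz, one_mul]
    have : ‖eval z p‖ ≠ 0 := by simpa using hpz
    field_simp
  have habs2 : ‖(n : ℂ) * P.eval z - z * (derivative P).eval z‖
      = ‖(n : ℂ) - w‖ * ‖P.eval z‖ := by
    rw [← norm_mul]
    congr 1
    rw [hev, hder, hw]
    field_simp
  have hww : ‖w‖ ≤ ‖(n : ℂ) - w‖ := by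
    have h2 : normSq w ≤ normSq ((n : ℂ) - w) := by
      rw [Complex.normSq_sub]
      have hre2 : ((n : ℂ) * (starRingEnd ℂ) w).re = n * w.re := by
        simp [Complex.mul_re]
      rw [hre2]
      have hn0 : (0:ℝ) ≤ n := Nat.cast_nonneg n
      have : normSq ((n:ℂ)) = (n:ℝ)^2 := by
        rw [Complex.normSq_natCast]; ring
      nlinarith [hre]
    rw [Complex.norm_def, Complex.norm_def]
    exact Real.sqrt_le_sqrt h2
  rw [habs1, habs2]
  exact mul_le_mul_of_nonneg_right hww (norm_nonneg _)
noncomputable def auxQr (P : Polynomial ℂ) (n : ℕ) : Polynomial ℂ :=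
  ∑ k ∈ Finset.range (n + 1), C ((starRingEnd ℂ) (P.coeff (n - k))) * X ^ k

lemma auxQr_eval (P : Polynomial ℂ) (n : ℕ) (z : ℂ) :
    (auxQr P n).eval z = ∑ k ∈ Finset.range (n + 1), (starRingEnd ℂ) (P.coeff (n - k)) * z ^ k := by
  simp [auxQr, eval_finset_sum]

lemma auxQr_deriv_eval (P : Polynomial ℂ) (n : ℕ) (z : ℂ) :
    (derivative (auxQr P n)).eval z =
      ∑ k ∈ Finset.range (n + 1), (starRingEnd ℂ) (P.coeff (n - k)) * (k * z ^ (k - 1)) := by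
  simp [auxQr, derivative_sum, derivative_C_mul, derivative_X_pow, eval_finset_sum, mul_assoc]

lemma aux_Q_eq (n : ℕ) (P Q : Polynomial ℂ) (hP : P.natDegree = n)
    (hQ : ∀ z : ℂ, z ≠ 0 →
      Q.eval z = z ^ n * (starRingEnd ℂ) (P.eval ((starRingEnd ℂ) z)⁻¹)) :
    Q = auxQr P n := by
  apply Polynomial.eq_of_infinite_eval_eq
  apply Set.Infinite.mono (s := {(0:ℂ)}ᶜ)
  swap
  · exact (Set.finite_singleton 0).infinite_compl
  intro z hz
  have hz0 : z ≠ 0 := hz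
  have hzc : (starRingEnd ℂ) z ≠ 0 := by simpa using hz0
  have hzi : ((starRingEnd ℂ) z)⁻¹ ≠ 0 := inv_ne_zero hzc
  simp only [Set.mem_setOf_eq]
  rw [hQ z hz0, auxQr_eval]
  have hev : P.eval ((starRingEnd ℂ) z)⁻¹
      = ∑ k ∈ Finset.range (n + 1), P.coeff k * (((starRingEnd ℂ) z)⁻¹) ^ k :=
    eval_eq_sum_range' (by omega : P.natDegree < n + 1) _
  rw [hev, map_sum, Finset.mul_sum]
  rw [← Finset.sum_range_reflect]
  apply Finset.sum_congr rfl
  intro k hk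
  have hk' : k ≤ n := by simp at hk; omega
  have h1 : n - (n - k) = k := by omega
  simp only [Nat.add_sub_cancel]
  rw [map_mul, map_pow, map_inv₀, Complex.conj_conj, inv_pow]
  rw [← mul_assoc, mul_comm (z ^ n), mul_assoc]
  congr 1
  rw [← pow_sub₀ z hz0 (Nat.sub_le n k), h1]
lemma aux_deriv_eval (n : ℕ) (P : Polynomial ℂ) (hP : P.natDegree < n + 1) (z : ℂ) :
    (derivative P).eval z = ∑ k ∈ Finset.range (n + 1), P.coeff k * (k * z ^ (k - 1)) := by
  conv_lhs => rw [P.as_sum_range' (n+1) hP]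
  simp [derivative_sum, derivative_monomial, eval_monomial, derivative_C_mul, derivative_X_pow, eval_finset_sum, mul_assoc]

lemma aux_comb (n : ℕ) (g : ℕ → ℂ) (z : ℂ) :
    (n : ℂ) * (∑ k ∈ Finset.range (n + 1), g k * z ^ k)
      - z * (∑ k ∈ Finset.range (n + 1), g k * (k * z ^ (k - 1)))
    = ∑ k ∈ Finset.range (n + 1), ((n : ℂ) - k) * g k * z ^ k := by
  rw [Finset.mul_sum, Finset.mul_sum, ← Finset.sum_sub_distrib]
  apply Finset.sum_congr rfl
  intro k _
  cases k with
  | zero => simp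
  | succ m => rw [pow_succ]; push_cast; ring

lemma aux_conj_inv (z : ℂ) (hz : ‖z‖ = 1) : (starRingEnd ℂ) z = z⁻¹ := by
  have h : z * (starRingEnd ℂ) z = 1 := by
    rw [Complex.mul_conj]
    norm_cast
    rw [← Complex.sq_norm, hz]; norm_num
  exact eq_inv_of_mul_eq_one_left (by rw [mul_comm] at h; exact h)

lemma aux_gen (n : ℕ) (hn : 1 ≤ n) (f : ℕ → ℂ) (z : ℂ) (hz0 : z ≠ 0)
    (hzc : (starRingEnd ℂ) z = z⁻¹) :
    ∑ k ∈ Finset.range (n + 1), ((n : ℂ) - k) * f k * z ^ k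
      = z ^ (n - 1) * (starRingEnd ℂ)
          (∑ k ∈ Finset.range (n + 1), (starRingEnd ℂ) (f (n - k)) * (k * z ^ (k - 1))) := by
  rw [map_sum, Finset.mul_sum, ← Finset.sum_range_reflect]
  apply Finset.sum_congr rfl
  intro k hk
  have hk' : k ≤ n := by simp at hk; omega
  simp only [Nat.add_sub_cancel]
  rw [map_mul, Complex.conj_conj, map_mul, map_pow, hzc, map_natCast]
  have hcast : ((n : ℂ) - ((n - k : ℕ) : ℂ)) = (k : ℂ) := by
    rw [Nat.cast_sub hk']; ring
  rw [hcast]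
  cases k with
  | zero => simp
  | succ m =>
    have hm : m ≤ n - 1 := by omega
    have h2 : n - (m + 1) = (n - 1) - m := by omega
    have h4 : z ^ (n - (m + 1)) = z ^ (n - 1) * (z ^ m)⁻¹ := by
      rw [h2, pow_sub₀ z hz0 hm]
    rw [h4, inv_pow]
    simp only [Nat.add_sub_cancel]
    ring
lemma aux_I2 (n : ℕ) (hn : 1 ≤ n) (P : Polynomial ℂ) (hP : P.natDegree = n)
    (z : ℂ) (hz : ‖z‖ = 1) :
    (n : ℂ) * P.eval z - z * (derivative P).eval z
      = z ^ (n - 1) * (starRingEnd ℂ) ((derivative (auxQr P n)).eval z) := by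
  have hz0 : z ≠ 0 := by intro h; rw [h] at hz; simp at hz
  have hzc := aux_conj_inv z hz
  rw [eval_eq_sum_range' (by omega : P.natDegree < n + 1) z,
    aux_deriv_eval n P (by omega), aux_comb, auxQr_deriv_eval]
  exact aux_gen n hn P.coeff z hz0 hzc

lemma aux_I1 (n : ℕ) (hn : 1 ≤ n) (P : Polynomial ℂ) (hP : P.natDegree = n)
    (z : ℂ) (hz : ‖z‖ = 1) :
    (n : ℂ) * (auxQr P n).eval z - z * (derivative (auxQr P n)).eval z
      = z ^ (n - 1) * (starRingEnd ℂ) ((derivative P).eval z) := by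
  have hz0 : z ≠ 0 := by intro h; rw [h] at hz; simp at hz
  have hzc := aux_conj_inv z hz
  rw [auxQr_eval, auxQr_deriv_eval, aux_comb, aux_deriv_eval n P (by omega),
    aux_gen n hn (fun k => (starRingEnd ℂ) (P.coeff (n - k))) z hz0 hzc]
  congr 1
  apply congrArg
  apply Finset.sum_congr rfl
  intro k hk
  have hk' : k ≤ n := by simp at hk; omega
  have h1 : n - (n - k) = k := by omega
  rw [Complex.conj_conj, h1]

-- square comparison
lemma aux_sq_cmp (a b w α : ℂ) (hw : ‖w‖ = 1) (hα : 1 ≤ ‖α‖)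
    (hab : ‖a‖ ≤ ‖b‖) :
    ‖w * (starRingEnd ℂ) b + α * a‖ ≤ ‖w * (starRingEnd ℂ) a + α * b‖ := by
  have h2 : normSq (w * (starRingEnd ℂ) b + α * a) ≤ normSq (w * (starRingEnd ℂ) a + α * b) := by
    rw [Complex.normSq_add, Complex.normSq_add]
    have hcross : (w * (starRingEnd ℂ) b * (starRingEnd ℂ) (α * a)).re
        = (w * (starRingEnd ℂ) a * (starRingEnd ℂ) (α * b)).re := by
      rw [map_mul, map_mul]; ring_nf
    rw [hcross]
    have hwn : normSq w = 1 := by rw [← Complex.sq_norm, hw]; norm_num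
    have hαn : 1 ≤ normSq α := by rw [← Complex.sq_norm]; nlinarith
    have habn : normSq a ≤ normSq b := by
      rw [← Complex.sq_norm, ← Complex.sq_norm]
      exact pow_le_pow_left₀ (norm_nonneg _) hab 2
    simp only [Complex.normSq_mul, Complex.normSq_conj, hwn, one_mul]
    nlinarith
  rw [Complex.norm_def, Complex.norm_def]
  exact Real.sqrt_le_sqrt h2
theorem aziz_ratio_ge_one (n : ℕ) (hn : 1 ≤ n) (P Q : Polynomial ℂ)
    (hP : P.natDegree = n)
    (hPz : ∀ z : ℂ, ‖z‖ < 1 → P.eval z ≠ 0)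
    (hQ : ∀ z : ℂ, z ≠ 0 →
      Q.eval z = z ^ n * (starRingEnd ℂ) (P.eval ((starRingEnd ℂ) z)⁻¹)) :
    ∀ α : ℂ, 1 ≤ ‖α‖ → ∀ z : ℂ, ‖z‖ = 1 →
      ((n : ℂ) * P.eval z + (α - z) * (derivative P).eval z) ≠ 0 →
      ‖(n : ℂ) * Q.eval z + (α - z) * (derivative Q).eval z‖ /
          ‖(n : ℂ) * P.eval z + (α - z) * (derivative P).eval z‖ ≥ 1 := by
  intro α hα z hz hD
  have hQeq : Q = auxQr P n := aux_Q_eq n P Q hP hQ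
  subst hQeq
  set a := (derivative P).eval z with ha
  set b := (derivative (auxQr P n)).eval z with hb
  set w := z ^ (n - 1) with hwdef
  have hw : ‖w‖ = 1 := by rw [hwdef, norm_pow, hz, one_pow]
  have hI2 := aux_I2 n hn P hP z hz
  have hI1 := aux_I1 n hn P hP z hz
  have hab : ‖a‖ ≤ ‖b‖ := by
    have h1 := aux_key1 n hn P hP hPz z hz
    rw [hI2] at h1
    rwa [norm_mul, hw, one_mul, Complex.norm_conj] at h1
  have hDp : (n : ℂ) * P.eval z + (α - z) * a = w * (starRingEnd ℂ) b + α * a := by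
    linear_combination hI2
  have hDq : (n : ℂ) * (auxQr P n).eval z + (α - z) * b = w * (starRingEnd ℂ) a + α * b := by
    linear_combination hI1
  rw [hDp, hDq]
  rw [hDp] at hD
  have hle := aux_sq_cmp a b w α hw hα hab
  have hpos : 0 < ‖w * (starRingEnd ℂ) b + α * a‖ := norm_pos_iff.mpr hD
  rw [ge_iff_le, le_div_iff₀ hpos, one_mul]
  exact hle
end
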